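/- Let A ∈ (ℝ ∪ {−∞})^{n×n} have spectral radius λ > −∞, let B ∈ (ℝ ∪ {−∞})^{n×n} satisfy Tr(B) ≤ 𝟙, and let g ∈ (ℝ ∪ {−∞})ⁿ. Set θ = λ ⊕ ⊕_{k=1}^{n−1} ⊕ tr^{1/k}(A B^{i_1} A B^{i_2} ⋯ A B^{i_k}), where the inner ⊕ ranges over all nonnegative integers i_1, …, i_k with 1 ≤ i_1 + ⋯ + i_k ≤ n − k. Then the minimum of x⁻ A x over all regular vectors x ∈ ℝⁿ satisfying B x ⊕ g ≤ x equals θ, and a regular vector x satisfying this constraint attains this minimum if and only if x = (θ⁻¹ A ⊕ B)* u for some vector u with u ≥ g, where θ⁻¹ = −θ. -/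

import Mathlib

open Finset

noncomputable section

namespace MaxPlus

/-- Max-plus multiplicative inverse: `-a` for real `a`, `⊥` for `⊥`. -/
def tinv (a : WithBot ℝ) : WithBot ℝ := WithBot.map (fun r => -r) a

/-- Max-plus rational power `a^(1/k) = a / k`. -/
def trt (a : WithBot ℝ) (k : ℕ) : WithBot ℝ := WithBot.map (fun r => r / (k : ℝ)) a

/-- A vector is regular if it has no `⊥` (= -∞) entries. -/
def Reg {n : ℕ} (x : Fin n → WithBot ℝ) : Prop := ∀ i, x i ≠ ⊥

/-- `cdot q x = q⁻ x`, the max-plus product of the conjugate row vector `q⁻` with `x`. -/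
def cdot {n : ℕ} (q x : Fin n → WithBot ℝ) : WithBot ℝ :=
  Finset.univ.sup fun i => tinv (q i) + x i

/-- Max-plus matrix-vector product. -/
def mulVec {m n : ℕ} (A : Matrix (Fin m) (Fin n) (WithBot ℝ)) (x : Fin n → WithBot ℝ) :
    Fin m → WithBot ℝ := fun i => Finset.univ.sup fun j => A i j + x j

/-- Max-plus matrix product. -/
def tmul {l m n : ℕ} (A : Matrix (Fin l) (Fin m) (WithBot ℝ))
    (B : Matrix (Fin m) (Fin n) (WithBot ℝ)) : Matrix (Fin l) (Fin n) (WithBot ℝ) :=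
  fun i j => Finset.univ.sup fun k => A i k + B k j

/-- Multiplicative conjugate transpose of a matrix. -/
def conjM {m n : ℕ} (A : Matrix (Fin m) (Fin n) (WithBot ℝ)) :
    Matrix (Fin n) (Fin m) (WithBot ℝ) := fun i j => tinv (A j i)

/-- Max-plus identity matrix. -/
def tId {n : ℕ} : Matrix (Fin n) (Fin n) (WithBot ℝ) := fun i j => if i = j then 0 else ⊥

/-- Max-plus matrix power. -/
def tpow {n : ℕ} (A : Matrix (Fin n) (Fin n) (WithBot ℝ)) : ℕ → Matrix (Fin n) (Fin n) (WithBot ℝ)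
  | 0 => tId
  | k + 1 => tmul A (tpow A k)

/-- Max-plus trace. -/
def ttr {n : ℕ} (A : Matrix (Fin n) (Fin n) (WithBot ℝ)) : WithBot ℝ :=
  Finset.univ.sup fun i => A i i

/-- `Tr(A) = tr A ⊕ tr A² ⊕ ⋯ ⊕ tr Aⁿ`. -/
def TrOp {n : ℕ} (A : Matrix (Fin n) (Fin n) (WithBot ℝ)) : WithBot ℝ :=
  (Finset.Icc 1 n).sup fun m => ttr (tpow A m)

/-- Kleene star `A* = I ⊕ A ⊕ ⋯ ⊕ A^(n-1)`. -/
def kstar {n : ℕ} (A : Matrix (Fin n) (Fin n) (WithBot ℝ)) : Matrix (Fin n) (Fin n) (WithBot ℝ) :=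
  fun i j => (Finset.range n).sup fun k => tpow A k i j

/-- Max-plus spectral radius `λ = ⊕_{m=1}^n (tr A^m)^(1/m)`. -/
def specRad {n : ℕ} (A : Matrix (Fin n) (Fin n) (WithBot ℝ)) : WithBot ℝ :=
  (Finset.Icc 1 n).sup fun m => trt (ttr (tpow A m)) m

/-- `prodAB A B [i₁, …, i_k] = A B^{i₁} A B^{i₂} ⋯ A B^{i_k}`. -/
def prodAB {n : ℕ} (A B : Matrix (Fin n) (Fin n) (WithBot ℝ)) :
    List ℕ → Matrix (Fin n) (Fin n) (WithBot ℝ)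
  | [] => tId
  | i :: t => tmul (tmul A (tpow B i)) (prodAB A B t)

/-- The all-ones (all-`𝟙 = 0`) vector. -/
def onesV (n : ℕ) : Fin n → WithBot ℝ := fun _ => 0

end MaxPlus

open MaxPlus


namespace MP
lemma wadd_sup (a b c : WithBot ℝ) : a + (b ⊔ c) = (a+b) ⊔ (a+c) := by
  rcases le_total b c with h|h
  · rw [sup_eq_right.2 h, sup_eq_right.2 (add_le_add_right h a)]
  · rw [sup_eq_left.2 h, sup_eq_left.2 (add_le_add_right h a)]

lemma wsup_add (a b c : WithBot ℝ) : (a ⊔ b) + c = (a+c) ⊔ (b+c) := by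
  rw [add_comm, wadd_sup, add_comm c a, add_comm c b]

lemma add_finsetSup {ι : Type*} (s : Finset ι) (f : ι → WithBot ℝ) (a : WithBot ℝ) :
    a + s.sup f = s.sup fun i => a + f i := by
  exact Finset.comp_sup_eq_sup_comp (a + ·) (fun x y => wadd_sup a x y) (by simp)

lemma finsetSup_add {ι : Type*} (s : Finset ι) (f : ι → WithBot ℝ) (a : WithBot ℝ) :
    s.sup f + a = s.sup fun i => f i + a := by
  rw [add_comm, add_finsetSup]; simp_rw [add_comm]

lemma real_add_le_iff (c : ℝ) (b X : WithBot ℝ) :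
    (c : WithBot ℝ) + b ≤ X ↔ b ≤ ((-c : ℝ) : WithBot ℝ) + X := by
  constructor
  · intro h
    have := add_le_add_right h ((-c : ℝ) : WithBot ℝ)
    rwa [← add_assoc, show ((-c:ℝ):WithBot ℝ) + (c:WithBot ℝ) = 0 by
      rw [← WithBot.coe_add]; norm_num, zero_add] at this
  · intro h
    have := add_le_add_right h ((c : ℝ) : WithBot ℝ)
    rwa [← add_assoc, show ((c:ℝ):WithBot ℝ) + ((-c:ℝ):WithBot ℝ) = 0 by
      rw [← WithBot.coe_add]; norm_num, zero_add] at this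

lemma real_cancel (c : ℝ) (a b : WithBot ℝ) (h : a + (c : WithBot ℝ) ≤ b + c) : a ≤ b := by
  exact (WithBot.add_le_add_iff_right (by simp)).1 h

lemma nsmul_bot (k : ℕ) (hk : 1 ≤ k) : k • (⊥ : WithBot ℝ) = ⊥ := by
  induction k with
  | zero => omega
  | succ m ih => rw [succ_nsmul]; simp

lemma nsmul_coe (k : ℕ) (r : ℝ) : k • ((r : ℝ) : WithBot ℝ) = ((k * r : ℝ) : WithBot ℝ) := by
  induction k with
  | zero => simp
  | succ k ih => rw [succ_nsmul, ih, ← WithBot.coe_add]; congr 1; push_cast; ring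
end MP

namespace MP2
open MP MaxPlus

lemma entry_le_tmul {l m n : ℕ} (A : Matrix (Fin l) (Fin m) (WithBot ℝ))
    (B : Matrix (Fin m) (Fin n) (WithBot ℝ)) (i k j) : A i k + B k j ≤ tmul A B i j :=
  Finset.le_sup (f := fun k => A i k + B k j) (Finset.mem_univ k)

lemma tmul_assoc {l m n o : ℕ} (A : Matrix (Fin l) (Fin m) (WithBot ℝ))
    (B : Matrix (Fin m) (Fin n) (WithBot ℝ)) (C : Matrix (Fin n) (Fin o) (WithBot ℝ)) :
    tmul (tmul A B) C = tmul A (tmul B C) := by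
  funext i j
  show (Finset.univ.sup fun k => (Finset.univ.sup fun p => A i p + B p k) + C k j)
      = Finset.univ.sup fun p => A i p + Finset.univ.sup fun k => B p k + C k j
  simp_rw [finsetSup_add, add_finsetSup, add_assoc]
  exact Finset.sup_comm _ _ _

lemma mulVec_tmul {l m n : ℕ} (A : Matrix (Fin l) (Fin m) (WithBot ℝ))
    (B : Matrix (Fin m) (Fin n) (WithBot ℝ)) (x : Fin n → WithBot ℝ) :
    mulVec (tmul A B) x = mulVec A (mulVec B x) := by
  funext i
  show (Finset.univ.sup fun k => (Finset.univ.sup fun p => A i p + B p k) + x k)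
      = Finset.univ.sup fun p => A i p + Finset.univ.sup fun k => B p k + x k
  simp_rw [finsetSup_add, add_finsetSup, add_assoc]
  exact Finset.sup_comm _ _ _

lemma mulVec_mono {m n : ℕ} {A A' : Matrix (Fin m) (Fin n) (WithBot ℝ)}
    {x y : Fin n → WithBot ℝ} (hA : ∀ i j, A i j ≤ A' i j) (hx : ∀ j, x j ≤ y j) (i : Fin m) :
    mulVec A x i ≤ mulVec A' y i :=
  Finset.sup_le fun j _ => le_trans (add_le_add (hA i j) (hx j))
    (Finset.le_sup (f := fun j => A' i j + y j) (Finset.mem_univ j))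

lemma tmul_tId {m n : ℕ} (A : Matrix (Fin m) (Fin n) (WithBot ℝ)) : tmul A tId = A := by
  funext i j
  apply le_antisymm
  · apply Finset.sup_le; intro k _
    by_cases h : k = j
    · subst h; simp [tId]
    · simp [tId, h]
  · have := entry_le_tmul A tId i j j
    simpa [tId] using this

lemma tId_tmul {m n : ℕ} (A : Matrix (Fin m) (Fin n) (WithBot ℝ)) : tmul tId A = A := by
  funext i j
  apply le_antisymm
  · apply Finset.sup_le; intro k _
    by_cases h : i = k
    · subst h; simp [tId]
    · simp [tId, h]
  · have := entry_le_tmul tId A i i j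
    simpa [tId] using this

lemma mulVec_scalar {m n : ℕ} (A : Matrix (Fin m) (Fin n) (WithBot ℝ)) (c : WithBot ℝ)
    (x : Fin n → WithBot ℝ) (i : Fin m) :
    mulVec A (fun j => c + x j) i = c + mulVec A x i := by
  show (Finset.univ.sup fun j => A i j + (c + x j)) = c + Finset.univ.sup fun j => A i j + x j
  simp_rw [add_finsetSup, add_left_comm]

lemma tmul_scalar_left {l m n : ℕ} (A : Matrix (Fin l) (Fin m) (WithBot ℝ))
    (B : Matrix (Fin m) (Fin n) (WithBot ℝ)) (c : WithBot ℝ) (i j) :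
    tmul (fun i k => c + A i k) B i j = c + tmul A B i j := by
  show (Finset.univ.sup fun k => c + A i k + B k j) = c + Finset.univ.sup fun k => A i k + B k j
  simp_rw [add_finsetSup, add_assoc]

lemma tmul_scalar_right {l m n : ℕ} (A : Matrix (Fin l) (Fin m) (WithBot ℝ))
    (B : Matrix (Fin m) (Fin n) (WithBot ℝ)) (c : WithBot ℝ) (i j) :
    tmul A (fun k j => c + B k j) i j = c + tmul A B i j := by
  show (Finset.univ.sup fun k => A i k + (c + B k j)) = c + Finset.univ.sup fun k => A i k + B k j
  simp_rw [add_finsetSup, add_left_comm]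

lemma diag_le_ttr {n : ℕ} (M : Matrix (Fin n) (Fin n) (WithBot ℝ)) (i) : M i i ≤ ttr M :=
  Finset.le_sup (f := fun i => M i i) (Finset.mem_univ i)

lemma ttr_scalar {n : ℕ} (M : Matrix (Fin n) (Fin n) (WithBot ℝ)) (c : WithBot ℝ) :
    ttr (fun i j => c + M i j) = c + ttr M := by
  show (Finset.univ.sup fun i => c + M i i) = c + Finset.univ.sup fun i => M i i
  rw [add_finsetSup]

lemma ttr_tmul_comm {n : ℕ} (M N : Matrix (Fin n) (Fin n) (WithBot ℝ)) :
    ttr (tmul M N) = ttr (tmul N M) := by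
  show (Finset.univ.sup fun i => Finset.univ.sup fun k => M i k + N k i)
      = Finset.univ.sup fun k => Finset.univ.sup fun i => N k i + M i k
  rw [Finset.sup_comm]
  simp_rw [add_comm]

end MP2

namespace MP3
open MP MP2 MaxPlus

/-- Weight of the path `p 0, p 1, …, p m` in the matrix `C`. -/
def pathW {n : ℕ} (C : Matrix (Fin n) (Fin n) (WithBot ℝ)) (p : ℕ → Fin n) (m : ℕ) : WithBot ℝ :=
  ∑ t ∈ Finset.range m, C (p t) (p (t + 1))

lemma pathW_zero {n : ℕ} (C : Matrix (Fin n) (Fin n) (WithBot ℝ)) (p) : pathW C p 0 = 0 := by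
  simp [pathW]

lemma pathW_succ' {n : ℕ} (C : Matrix (Fin n) (Fin n) (WithBot ℝ)) (p m) :
    pathW C p (m + 1) = C (p 0) (p 1) + pathW C (fun t => p (t + 1)) m := by
  rw [pathW, Finset.sum_range_succ', add_comm]; rfl

lemma pathW_split {n : ℕ} (C : Matrix (Fin n) (Fin n) (WithBot ℝ)) (p) (a d : ℕ) :
    pathW C p (a + d) = pathW C p a + pathW C (fun t => p (a + t)) d := by
  induction d with
  | zero => simp [pathW]
  | succ d ih =>
    rw [show a + (d+1) = (a+d)+1 by omega]
    simp only [pathW] at ih ⊢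
    rw [Finset.sum_range_succ, ih, Finset.sum_range_succ, add_assoc]
    simp [Nat.add_assoc]

lemma pathW_le_tpow {n : ℕ} (C : Matrix (Fin n) (Fin n) (WithBot ℝ)) :
    ∀ m (p : ℕ → Fin n), pathW C p m ≤ tpow C m (p 0) (p m) := by
  intro m
  induction m with
  | zero => intro p; rw [pathW_zero]; simp [tpow, tId]
  | succ m ih =>
    intro p
    rw [pathW_succ']
    refine le_trans (add_le_add_right (ih fun t => p (t + 1)) _) ?_
    exact entry_le_tmul C (tpow C m) (p 0) (p 1) (p (m + 1))

lemma tpow_le_of_paths {n : ℕ} (C : Matrix (Fin n) (Fin n) (WithBot ℝ)) :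
    ∀ m (i j : Fin n) (X : WithBot ℝ),
      (∀ p : ℕ → Fin n, p 0 = i → p m = j → pathW C p m ≤ X) → tpow C m i j ≤ X := by
  intro m
  induction m with
  | zero =>
    intro i j X h
    by_cases hij : i = j
    · subst hij
      have := h (fun _ => i) rfl rfl
      rw [pathW_zero] at this
      simpa [tpow, tId] using this
    · simp [tpow, tId, hij]
  | succ m ih =>
    intro i j X h
    show (Finset.univ.sup fun k => C i k + tpow C m k j) ≤ X
    apply Finset.sup_le
    intro k _
    rcases eq_or_ne (C i k) ⊥ with hb | hb
    · simp [hb]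
    · obtain ⟨c, hc⟩ := WithBot.ne_bot_iff_exists.1 hb
      rw [← hc, real_add_le_iff]
      apply ih k j
      intro q hq0 hqm
      rw [← real_add_le_iff, hc]
      set p : ℕ → Fin n := fun t => if t = 0 then i else q (t - 1) with hp
      have hp0 : p 0 = i := rfl
      have hpm : p (m + 1) = j := by simp [hp, hqm]
      have key := h p hp0 hpm
      rw [pathW_succ'] at key
      have e1 : p 1 = k := by simp [hp, hq0]
      have e2 : (fun t => p (t + 1)) = q := by funext t; simp [hp]
      rwa [hp0, e1, e2] at key

lemma ttr_tpow_le_TrOp {n : ℕ} (C : Matrix (Fin n) (Fin n) (WithBot ℝ)) (d : ℕ)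
    (h1 : 1 ≤ d) (h2 : d ≤ n) : ttr (tpow C d) ≤ TrOp C :=
  Finset.le_sup (f := fun m => ttr (tpow C m)) (Finset.mem_Icc.2 ⟨h1, h2⟩)

lemma pathW_shorten {n : ℕ} (C : Matrix (Fin n) (Fin n) (WithBot ℝ)) (hTr : TrOp C ≤ 0)
    (m : ℕ) (IH : ∀ m' < m, ∀ p : ℕ → Fin n, pathW C p m' ≤ kstar C (p 0) (p m'))
    (p : ℕ → Fin n) (a b : ℕ) (hab : a < b) (hbn : b ≤ n) (hnm : n ≤ m) (heq : p a = p b) :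
    pathW C p m ≤ kstar C (p 0) (p m) := by
  have hbm : b ≤ m := le_trans hbn hnm
  have hd1 : 1 ≤ b - a := by omega
  -- split the path
  have hm : m = a + ((b - a) + (m - b)) := by omega
  have hsplit : pathW C p m
      = pathW C p a + (pathW C (fun t => p (a + t)) (b - a)
        + pathW C (fun t => p (a + ((b - a) + t))) (m - b)) := by
    conv_lhs => rw [hm]
    rw [pathW_split, pathW_split]
  -- the cycle has weight ≤ 0
  have hcyc : pathW C (fun t => p (a + t)) (b - a) ≤ 0 := by
    refine le_trans (pathW_le_tpow C (b - a) _) ?_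
    have e0 : p (a + 0) = p a := by norm_num
    have e1 : p (a + (b - a)) = p a := by rw [show a + (b - a) = b by omega, heq]
    rw [e0, e1]
    exact le_trans (diag_le_ttr _ (p a)) (le_trans (ttr_tpow_le_TrOp C (b - a) hd1 (by omega)) hTr)
  -- the shortened path
  set m' : ℕ := a + (m - b) with hm'
  set r : ℕ → Fin n := fun t => if t < a then p t else p (t - a + b) with hr
  have hra : pathW C r a = pathW C p a := by
    unfold pathW
    refine Finset.sum_congr rfl fun t ht => ?_
    have ht' : t < a := Finset.mem_range.1 ht
    have h1 : r t = p t := by simp [hr, ht']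
    have h2 : r (t + 1) = p (t + 1) := by
      by_cases h : t + 1 < a
      · simp [hr, h]
      · have hta : t + 1 = a := by omega
        simp only [hr, hta]
        rw [if_neg (lt_irrefl a), show a - a + b = b by omega, ← heq]
    rw [h1, h2]
  have hrt : pathW C (fun t => r (a + t)) (m - b) = pathW C (fun t => p (a + ((b - a) + t))) (m - b) := by
    unfold pathW
    refine Finset.sum_congr rfl fun t ht => ?_
    have e : ∀ s : ℕ, r (a + s) = p (a + ((b - a) + s)) := by
      intro s
      simp only [hr, if_neg (by omega : ¬ a + s < a)]
      congr 1
      omega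
    show C (r (a + t)) (r (a + (t + 1))) = C (p (a + (b - a + t))) (p (a + (b - a + (t + 1))))
    rw [e t, e (t + 1)]
  have hrm : pathW C r m' = pathW C p a + pathW C (fun t => p (a + ((b - a) + t))) (m - b) := by
    rw [hm', pathW_split, hra, hrt]
  have hle : pathW C p m ≤ pathW C r m' := by
    rw [hsplit, hrm]
    refine add_le_add_right ?_ _
    refine le_trans (add_le_add_left hcyc _) ?_
    rw [zero_add]
  have hr0 : r 0 = p 0 := by
    by_cases h : 0 < a
    · simp [hr, h]
    · have ha0 : a = 0 := by omega
      simp only [hr, ha0]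
      rw [if_neg (lt_irrefl 0), show 0 - 0 + b = b by omega, ← heq, ha0]
  have hrm' : r m' = p m := by
    simp only [hr, hm', if_neg (by omega : ¬ a + (m - b) < a)]
    congr 1
    omega
  have hm'lt : m' < m := by omega
  calc pathW C p m ≤ pathW C r m' := hle
    _ ≤ kstar C (r 0) (r m') := IH m' hm'lt r
    _ = kstar C (p 0) (p m) := by rw [hr0, hrm']

lemma pathW_le_kstar {n : ℕ} (C : Matrix (Fin n) (Fin n) (WithBot ℝ)) (hTr : TrOp C ≤ 0) :
    ∀ m (p : ℕ → Fin n), pathW C p m ≤ kstar C (p 0) (p m) := by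
  intro m
  induction m using Nat.strong_induction_on with
  | _ m IH =>
  intro p
  by_cases hmn : m < n
  · refine le_trans (pathW_le_tpow C m p) ?_
    exact Finset.le_sup (f := fun k => tpow C k (p 0) (p m)) (Finset.mem_range.2 hmn)
  · push_neg at hmn
    obtain ⟨a, b, hab, heq⟩ := Fintype.exists_ne_map_eq_of_card_lt
      (fun t : Fin (n + 1) => p t) (by simp)
    rcases hab.lt_or_gt with hlt | hlt
    · exact pathW_shorten C hTr m IH p a b
        (by exact_mod_cast hlt) (by omega) hmn heq
    · exact pathW_shorten C hTr m IH p b a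
        (by exact_mod_cast hlt) (by omega) hmn heq.symm

lemma tpow_le_kstar {n : ℕ} (C : Matrix (Fin n) (Fin n) (WithBot ℝ)) (hTr : TrOp C ≤ 0)
    (m : ℕ) (i j : Fin n) : tpow C m i j ≤ kstar C i j := by
  apply tpow_le_of_paths
  intro p h0 hm
  rw [← h0, ← hm]
  exact pathW_le_kstar C hTr m p

lemma mulVec_tId {n : ℕ} (x : Fin n → WithBot ℝ) : mulVec tId x = x := by
  funext i
  apply le_antisymm
  · apply Finset.sup_le
    intro j _
    by_cases h : i = j
    · subst h; simp [tId]
    · simp [tId, h]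
  · have : tId i i + x i ≤ mulVec tId x i :=
      Finset.le_sup (f := fun j => tId i j + x j) (Finset.mem_univ i)
    simpa [tId] using this

lemma mulVec_tpow_le {n : ℕ} (C : Matrix (Fin n) (Fin n) (WithBot ℝ)) (x : Fin n → WithBot ℝ)
    (h : ∀ i, mulVec C x i ≤ x i) : ∀ k i, mulVec (tpow C k) x i ≤ x i := by
  intro k
  induction k with
  | zero => intro i; rw [show tpow C 0 = tId from rfl, mulVec_tId]
  | succ k ih =>
    intro i
    rw [show tpow C (k+1) = tmul C (tpow C k) from rfl, mulVec_tmul]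
    exact le_trans (mulVec_mono (fun _ _ => le_rfl) ih i) (h i)

lemma mulVec_kstar_le {n : ℕ} (C : Matrix (Fin n) (Fin n) (WithBot ℝ)) (x : Fin n → WithBot ℝ)
    (h : ∀ i, mulVec C x i ≤ x i) (i : Fin n) : mulVec (kstar C) x i ≤ x i := by
  apply Finset.sup_le
  intro j _
  rw [show kstar C i j = (Finset.range n).sup fun k => tpow C k i j from rfl, finsetSup_add]
  apply Finset.sup_le
  intro k _
  exact le_trans (Finset.le_sup (f := fun j => tpow C k i j + x j) (Finset.mem_univ j))
    (mulVec_tpow_le C x h k i)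

lemma le_mulVec_kstar {n : ℕ} (C : Matrix (Fin n) (Fin n) (WithBot ℝ)) (x : Fin n → WithBot ℝ)
    (i : Fin n) : x i ≤ mulVec (kstar C) x i := by
  have h0 : (0 : WithBot ℝ) ≤ kstar C i i := by
    have : tpow C 0 i i ≤ kstar C i i :=
      Finset.le_sup (f := fun k => tpow C k i i) (Finset.mem_range.2 i.pos)
    simpa [tpow, tId] using this
  calc x i = 0 + x i := (zero_add _).symm
    _ ≤ kstar C i i + x i := add_le_add_left h0 _
    _ ≤ mulVec (kstar C) x i :=
        Finset.le_sup (f := fun j => kstar C i j + x j) (Finset.mem_univ i)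

lemma tmul_kstar_le {n : ℕ} (C : Matrix (Fin n) (Fin n) (WithBot ℝ)) (hTr : TrOp C ≤ 0)
    (i j : Fin n) : tmul C (kstar C) i j ≤ kstar C i j := by
  apply Finset.sup_le
  intro k _
  rw [show kstar C k j = (Finset.range n).sup fun l => tpow C l k j from rfl, add_finsetSup]
  apply Finset.sup_le
  intro l _
  exact le_trans (entry_le_tmul C (tpow C l) i k j) (tpow_le_kstar C hTr (l + 1) i j)
end MP3

namespace MP4
open MP MP2 MP3 MaxPlus

/-- Product of the matrices selected by a boolean word (`true ↦ D`, `false ↦ B`). -/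
def wordProd {n : ℕ} (D B : Matrix (Fin n) (Fin n) (WithBot ℝ)) :
    List Bool → Matrix (Fin n) (Fin n) (WithBot ℝ)
  | [] => tId
  | b :: t => tmul (if b then D else B) (wordProd D B t)

lemma wordProd_append {n : ℕ} (D B : Matrix (Fin n) (Fin n) (WithBot ℝ)) (u v : List Bool) :
    wordProd D B (u ++ v) = tmul (wordProd D B u) (wordProd D B v) := by
  induction u with
  | nil => rw [List.nil_append, show wordProd D B [] = tId from rfl, tId_tmul]
  | cons b t ih =>
    rw [List.cons_append, show wordProd D B (b :: (t ++ v))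
        = tmul (if b then D else B) (wordProd D B (t ++ v)) from rfl, ih,
      show wordProd D B (b :: t) = tmul (if b then D else B) (wordProd D B t) from rfl,
      tmul_assoc]

lemma wordProd_replicate_false {n : ℕ} (D B : Matrix (Fin n) (Fin n) (WithBot ℝ)) (m : ℕ) :
    wordProd D B (List.replicate m false) = tpow B m := by
  induction m with
  | zero => rfl
  | succ m ih =>
    rw [List.replicate_succ, show wordProd D B (false :: List.replicate m false)
      = tmul (if false then D else B) (wordProd D B (List.replicate m false)) from rfl, ih]
    rfl

lemma tpow_le_of_words {n : ℕ} (C D B : Matrix (Fin n) (Fin n) (WithBot ℝ))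
    (hC : ∀ i j, C i j = D i j ⊔ B i j) :
    ∀ m (i j : Fin n) (X : WithBot ℝ),
      (∀ w : List Bool, w.length = m → wordProd D B w i j ≤ X) → tpow C m i j ≤ X := by
  intro m
  induction m with
  | zero => intro i j X h; exact h [] rfl
  | succ m ih =>
    intro i j X h
    show (Finset.univ.sup fun k => C i k + tpow C m k j) ≤ X
    apply Finset.sup_le
    intro k _
    rw [hC i k, wsup_add]
    apply sup_le
    · rcases eq_or_ne (D i k) ⊥ with hb | hb
      · simp [hb]
      · obtain ⟨c, hc⟩ := WithBot.ne_bot_iff_exists.1 hb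
        rw [← hc, real_add_le_iff]
        apply ih
        intro w hw
        rw [← real_add_le_iff, hc]
        refine le_trans ?_ (h (true :: w) (by simp [hw]))
        exact le_trans le_rfl (by
          show D i k + wordProd D B w k j ≤ wordProd D B (true :: w) i j
          exact entry_le_tmul D (wordProd D B w) i k j)
    · rcases eq_or_ne (B i k) ⊥ with hb | hb
      · simp [hb]
      · obtain ⟨c, hc⟩ := WithBot.ne_bot_iff_exists.1 hb
        rw [← hc, real_add_le_iff]
        apply ih
        intro w hw
        rw [← real_add_le_iff, hc]
        refine le_trans ?_ (h (false :: w) (by simp [hw]))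
        show B i k + wordProd D B w k j ≤ wordProd D B (false :: w) i j
        exact entry_le_tmul B (wordProd D B w) i k j

lemma ttr_wordProd_rotate_one {n : ℕ} (D B : Matrix (Fin n) (Fin n) (WithBot ℝ)) (w : List Bool) :
    ttr (wordProd D B (w.rotate 1)) = ttr (wordProd D B w) := by
  cases w with
  | nil => rw [List.rotate_nil]
  | cons a t =>
    rw [show (a :: t).rotate 1 = t ++ [a] by
        rw [List.rotate_cons_succ, List.rotate_zero]]
    rw [wordProd_append, show wordProd D B [a] = tmul (if a then D else B) tId from rfl, tmul_tId,
      ttr_tmul_comm]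
    rfl

lemma ttr_wordProd_rotate {n : ℕ} (D B : Matrix (Fin n) (Fin n) (WithBot ℝ)) (r : ℕ) :
    ∀ w : List Bool, ttr (wordProd D B (w.rotate r)) = ttr (wordProd D B w) := by
  induction r with
  | zero => intro w; rw [List.rotate_zero]
  | succ r ih =>
    intro w
    rw [show w.rotate (r + 1) = (w.rotate 1).rotate r by
      rw [List.rotate_rotate, Nat.add_comm], ih, ttr_wordProd_rotate_one]

lemma count_true_add_count_false (w : List Bool) : w.count true + w.count false = w.length := by
  induction w with
  | nil => simp
  | cons b t ih => cases b <;> simp [List.count_cons] <;> omega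

/-- Structure of an arbitrary word: a leading `B`-run followed by `prodAB` groups. -/
lemma wordProd_group_aux {n : ℕ} (D B : Matrix (Fin n) (Fin n) (WithBot ℝ)) :
    ∀ w : List Bool, ∃ (i : ℕ) (tl : List ℕ),
      tl.length = w.count true ∧ i + tl.sum = w.count false ∧
      wordProd D B w = tmul (tpow B i) (prodAB D B tl) := by
  intro w
  induction w with
  | nil =>
    refine ⟨0, [], by simp, by simp, ?_⟩
    show tId = tmul tId (prodAB D B [])
    rw [tId_tmul]; rfl
  | cons b t ih =>
    obtain ⟨i, tl, h1, h2, h3⟩ := ih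
    cases b with
    | false =>
      refine ⟨i + 1, tl, by simpa using h1, by simp [List.count_cons]; omega, ?_⟩
      rw [show wordProd D B (false :: t) = tmul B (wordProd D B t) from rfl, h3, ← tmul_assoc]
      rfl
    | true =>
      refine ⟨0, i :: tl, by simp [List.count_cons, h1], by simpa using h2, ?_⟩
      show tmul D (wordProd D B t) = tmul (tpow B 0) (prodAB D B (i :: tl))
      rw [show (tpow B 0 : Matrix (Fin n) (Fin n) (WithBot ℝ)) = tId from rfl, tId_tmul, h3,
        ← tmul_assoc]
      rfl

lemma wordProd_group {n : ℕ} (D B : Matrix (Fin n) (Fin n) (WithBot ℝ)) (w : List Bool) :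
    ∃ is : List ℕ, is.length = w.count true + 1 ∧ is.sum = w.count false ∧
      wordProd D B (true :: w) = prodAB D B is := by
  obtain ⟨i, tl, h1, h2, h3⟩ := wordProd_group_aux D B w
  refine ⟨i :: tl, by simp [h1], by simpa using h2, ?_⟩
  rw [show wordProd D B (true :: w) = tmul D (wordProd D B w) from rfl, h3, ← tmul_assoc]
  rfl

lemma prodAB_scalar {n : ℕ} (A B : Matrix (Fin n) (Fin n) (WithBot ℝ)) (c : WithBot ℝ) :
    ∀ (is : List ℕ) (p q : Fin n),
      prodAB (fun a b => c + A a b) B is p q = is.length • c + prodAB A B is p q := by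
  intro is
  induction is with
  | nil => intro p q; simp [prodAB]
  | cons i t ih =>
    intro p q
    have hDrun : tmul (fun a b => c + A a b) (tpow B i) = fun p q => c + tmul A (tpow B i) p q := by
      funext p q; exact tmul_scalar_left A (tpow B i) c p q
    have hrec : prodAB (fun a b => c + A a b) B t = fun p q => t.length • c + prodAB A B t p q := by
      funext p q; exact ih p q
    show tmul (tmul (fun a b => c + A a b) (tpow B i)) (prodAB (fun a b => c + A a b) B t) p q = _
    rw [hDrun, hrec]
    rw [show tmul (fun p q => c + tmul A (tpow B i) p q) (fun p q => t.length • c + prodAB A B t p q) p q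
        = c + tmul (tmul A (tpow B i)) (fun p q => t.length • c + prodAB A B t p q) p q from
      tmul_scalar_left _ _ c p q]
    rw [tmul_scalar_right (tmul A (tpow B i)) (prodAB A B t) (t.length • c) p q]
    rw [← add_assoc, show c + t.length • c = (t.length + 1) • c by rw [succ_nsmul, add_comm]]
    rfl

lemma prodAB_replicate_zero {n : ℕ} (A B : Matrix (Fin n) (Fin n) (WithBot ℝ)) (k : ℕ) :
    prodAB A B (List.replicate k 0) = tpow A k := by
  induction k with
  | zero => rfl
  | succ k ih =>
    rw [List.replicate_succ, show prodAB A B (0 :: List.replicate k 0)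
      = tmul (tmul A (tpow B 0)) (prodAB A B (List.replicate k 0)) from rfl, ih,
      show tpow B 0 = tId from rfl, tmul_tId]
    rfl

lemma trt_le_iff (a s : WithBot ℝ) (k : ℕ) (hk : 1 ≤ k) : trt a k ≤ s ↔ a ≤ k • s := by
  rcases a with _ | r
  · exact iff_of_true bot_le bot_le
  · rcases s with _ | sr
    · show trt (r : WithBot ℝ) k ≤ (⊥ : WithBot ℝ) ↔ ((r:ℝ) : WithBot ℝ) ≤ k • (⊥ : WithBot ℝ)
      rw [nsmul_bot k hk]
      show ((r / (k:ℝ) : ℝ) : WithBot ℝ) ≤ (⊥ : WithBot ℝ) ↔ ((r:ℝ) : WithBot ℝ) ≤ (⊥ : WithBot ℝ)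
      simp
    · show trt (r : WithBot ℝ) k ≤ ((sr:ℝ) : WithBot ℝ) ↔ ((r:ℝ) : WithBot ℝ) ≤ k • ((sr:ℝ) : WithBot ℝ)
      rw [nsmul_coe]
      show ((r / (k:ℝ) : ℝ) : WithBot ℝ) ≤ (sr : WithBot ℝ) ↔ ((r:ℝ) : WithBot ℝ) ≤ ((k * sr : ℝ) : WithBot ℝ)
      rw [WithBot.coe_le_coe, WithBot.coe_le_coe]
      have hk0 : (0:ℝ) < k := by exact_mod_cast hk
      rw [div_le_iff₀ hk0]
      constructor <;> intro h <;> nlinarith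
end MP4

namespace MP5
open MP MP2 MP3 MP4 MaxPlus

lemma tinv_coe (r : ℝ) : tinv ((r : ℝ) : WithBot ℝ) = ((-r : ℝ) : WithBot ℝ) := rfl

lemma cdot_term_le {n : ℕ} (x y : Fin n → WithBot ℝ) (i : Fin n) :
    tinv (x i) + y i ≤ cdot x y :=
  Finset.le_sup (f := fun i => tinv (x i) + y i) (Finset.mem_univ i)

lemma le_of_tinv_add_le {v s : WithBot ℝ} (r : ℝ) (h : ((-r : ℝ) : WithBot ℝ) + v ≤ s) :
    v ≤ s + ((r : ℝ) : WithBot ℝ) := by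
  rw [real_add_le_iff] at h
  rw [show ((-(-r) : ℝ) : WithBot ℝ) = ((r:ℝ) : WithBot ℝ) by norm_num] at h
  rwa [add_comm] at h

section LB
variable {n : ℕ} (A B : Matrix (Fin n) (Fin n) (WithBot ℝ)) (x : Fin n → WithBot ℝ)

/-- `(A x)_i ≤ s + x i` where `s = x⁻ A x`. -/
lemma Ax_le (hreg : Reg x) (i : Fin n) :
    mulVec A x i ≤ cdot x (mulVec A x) + x i := by
  obtain ⟨r, hr⟩ := WithBot.ne_bot_iff_exists.1 (hreg i)
  rw [← hr]
  apply le_of_tinv_add_le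
  rw [show ((-r:ℝ) : WithBot ℝ) = tinv (x i) by rw [← hr]; rfl]
  exact cdot_term_le x (mulVec A x) i

lemma tpowA_bound (hreg : Reg x) :
    ∀ (m : ℕ) (i : Fin n), mulVec (tpow A m) x i ≤ m • cdot x (mulVec A x) + x i := by
  intro m
  induction m with
  | zero => intro i; rw [show tpow A 0 = tId from rfl, mulVec_tId, zero_nsmul, zero_add]
  | succ m ih =>
    intro i
    rw [show tpow A (m+1) = tmul A (tpow A m) from rfl, mulVec_tmul]
    calc mulVec A (mulVec (tpow A m) x) i
        ≤ mulVec A (fun j => m • cdot x (mulVec A x) + x j) i :=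
          mulVec_mono (fun _ _ => le_rfl) ih i
      _ = m • cdot x (mulVec A x) + mulVec A x i := mulVec_scalar A _ x i
      _ ≤ m • cdot x (mulVec A x) + (cdot x (mulVec A x) + x i) :=
          add_le_add_right (Ax_le A x hreg i) _
      _ = (m + 1) • cdot x (mulVec A x) + x i := by rw [succ_nsmul, add_assoc]

lemma prodAB_bound (hreg : Reg x) (hBx : ∀ i, mulVec B x i ≤ x i) :
    ∀ (is : List ℕ) (i : Fin n),
      mulVec (prodAB A B is) x i ≤ is.length • cdot x (mulVec A x) + x i := by
  intro is
  induction is with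
  | nil => intro i; rw [show prodAB A B [] = tId from rfl, mulVec_tId]; simp
  | cons i0 t ih =>
    intro i
    rw [show prodAB A B (i0 :: t) = tmul (tmul A (tpow B i0)) (prodAB A B t) from rfl,
      mulVec_tmul, mulVec_tmul]
    have step1 : ∀ j, mulVec (tpow B i0) (mulVec (prodAB A B t) x) j
        ≤ t.length • cdot x (mulVec A x) + x j := by
      intro j
      calc mulVec (tpow B i0) (mulVec (prodAB A B t) x) j
          ≤ mulVec (tpow B i0) (fun j => t.length • cdot x (mulVec A x) + x j) j :=
            mulVec_mono (fun _ _ => le_rfl) ih j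
        _ = t.length • cdot x (mulVec A x) + mulVec (tpow B i0) x j := mulVec_scalar _ _ x j
        _ ≤ t.length • cdot x (mulVec A x) + x j :=
            add_le_add_right (mulVec_tpow_le B x hBx i0 j) _
    calc mulVec A (mulVec (tpow B i0) (mulVec (prodAB A B t) x)) i
        ≤ mulVec A (fun j => t.length • cdot x (mulVec A x) + x j) i :=
          mulVec_mono (fun _ _ => le_rfl) step1 i
      _ = t.length • cdot x (mulVec A x) + mulVec A x i := mulVec_scalar A _ x i
      _ ≤ t.length • cdot x (mulVec A x) + (cdot x (mulVec A x) + x i) :=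
          add_le_add_right (Ax_le A x hreg i) _
      _ = (t.length + 1) • cdot x (mulVec A x) + x i := by rw [succ_nsmul, add_assoc]
      _ = (i0 :: t).length • cdot x (mulVec A x) + x i := by rw [List.length_cons]

lemma diag_le_of_vec {n : ℕ} (M : Matrix (Fin n) (Fin n) (WithBot ℝ)) (x : Fin n → WithBot ℝ)
    (hreg : Reg x) (c : WithBot ℝ) (i : Fin n) (h : mulVec M x i ≤ c + x i) : M i i ≤ c := by
  obtain ⟨r, hr⟩ := WithBot.ne_bot_iff_exists.1 (hreg i)
  have h1 : M i i + x i ≤ c + x i :=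
    le_trans (Finset.le_sup (f := fun j => M i j + x j) (Finset.mem_univ i)) h
  rw [← hr] at h1
  exact real_cancel r _ _ h1

/-- Lower bound: every feasible regular `x` has `θ ≤ x⁻ A x`. -/
lemma lower_bound (hreg : Reg x) (hBx : ∀ i, mulVec B x i ≤ x i)
    (θ : WithBot ℝ)
    (hθ : θ = specRad A ⊔ (Finset.Icc 1 (n - 1)).sup fun k =>
      ((Finset.univ : Finset (Fin k → Fin (n + 1))).filter
          fun i => 1 ≤ (∑ j, (i j : ℕ)) ∧ (∑ j, (i j : ℕ)) ≤ n - k).sup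
        fun i => trt (ttr (prodAB A B (List.ofFn fun j : Fin k => (i j : ℕ)))) k) :
    θ ≤ cdot x (mulVec A x) := by
  set s := cdot x (mulVec A x)
  rw [hθ]
  apply sup_le
  · apply Finset.sup_le
    intro m hm
    obtain ⟨hm1, _⟩ := Finset.mem_Icc.1 hm
    rw [trt_le_iff _ _ _ hm1]
    apply Finset.sup_le
    intro i _
    exact diag_le_of_vec _ x hreg _ i (tpowA_bound A x hreg m i)
  · apply Finset.sup_le
    intro k hk
    obtain ⟨hk1, _⟩ := Finset.mem_Icc.1 hk
    apply Finset.sup_le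
    intro ifun _
    rw [trt_le_iff _ _ _ hk1]
    apply Finset.sup_le
    intro i _
    have := prodAB_bound A B x hreg hBx (List.ofFn fun j : Fin k => (ifun j : ℕ)) i
    rw [List.length_ofFn] at this
    exact diag_le_of_vec _ x hreg _ i this

end LB

lemma exists_rotate_head (w : List Bool) (h : true ∈ w) : ∃ r w', w.rotate r = true :: w' := by
  refine ⟨w.idxOf true, ?_⟩
  have hlt : w.idxOf true < w.length := List.idxOf_lt_length_iff.2 h
  rw [List.rotate_eq_drop_append_take (le_of_lt hlt), List.drop_eq_getElem_cons hlt,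
    List.getElem_idxOf hlt]
  exact ⟨_, rfl⟩

/-- The crucial fact `Tr(θ⁻¹ A ⊕ B) ≤ 𝟙`. -/
lemma TrC_le {n : ℕ} (A B : Matrix (Fin n) (Fin n) (WithBot ℝ)) (hB : TrOp B ≤ 0)
    (θr : ℝ)
    (hlamθ : specRad A ≤ ((θr : ℝ) : WithBot ℝ))
    (hθ2 : ∀ (k : ℕ), 1 ≤ k → k ≤ n - 1 → ∀ is : List ℕ, is.length = k →
      1 ≤ is.sum → is.sum ≤ n - k → trt (ttr (prodAB A B is)) k ≤ ((θr : ℝ) : WithBot ℝ)) :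
    TrOp (fun a b => (tinv ((θr:ℝ) : WithBot ℝ) + A a b) ⊔ B a b) ≤ 0 := by
  set θ : WithBot ℝ := ((θr : ℝ) : WithBot ℝ) with hθdef
  set D : Matrix (Fin n) (Fin n) (WithBot ℝ) := fun a b => tinv θ + A a b with hD
  set C : Matrix (Fin n) (Fin n) (WithBot ℝ) := fun a b => D a b ⊔ B a b with hC
  apply Finset.sup_le
  intro m hm
  obtain ⟨hm1, hm2⟩ := Finset.mem_Icc.1 hm
  apply Finset.sup_le
  intro i _
  apply tpow_le_of_words C D B (fun _ _ => rfl)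
  intro w hw
  set k := w.count true with hk
  rcases Nat.eq_zero_or_pos k with hk0 | hkpos
  · -- pure B word
    have hall : ∀ b ∈ w, b = false := by
      intro b hb
      cases b
      · rfl
      · exact absurd hb (List.count_eq_zero.1 hk0)
    have hrep : w = List.replicate w.length false := List.eq_replicate_of_mem hall
    rw [hrep, hw, wordProd_replicate_false]
    exact le_trans (diag_le_ttr _ i) (le_trans (ttr_tpow_le_TrOp B m hm1 hm2) hB)
  · -- word with at least one A
    have htmem : true ∈ w := by
      by_contra hmem
      rw [← List.count_eq_zero (a := true)] at hmem
      omega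
    obtain ⟨r, w₂, hrot⟩ := exists_rotate_head w htmem
    have hct : w₂.count true = k - 1 := by
      have := (List.rotate_perm w r).count_eq true
      rw [hrot] at this
      simp [List.count_cons] at this
      omega
    have hcf : w₂.count false = m - k := by
      have hc := (List.rotate_perm w r).count_eq false
      rw [hrot] at hc
      simp [List.count_cons] at hc
      have hlen := count_true_add_count_false w
      rw [hw] at hlen
      have hlen2 := count_true_add_count_false w₂
      have hlr := List.length_rotate w r
      rw [hrot, hw] at hlr
      simp at hlr
      omega
    obtain ⟨is, his1, his2, his3⟩ := wordProd_group D B w₂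
    have hisl : is.length = k := by omega
    have hiss : is.sum = m - k := by omega
    have hkm : k ≤ m := by rw [hk, ← hw]; exact List.count_le_length
    calc wordProd D B w i i ≤ ttr (wordProd D B w) := diag_le_ttr _ i
      _ = ttr (wordProd D B (w.rotate r)) := (ttr_wordProd_rotate D B r w).symm
      _ = ttr (prodAB D B is) := by rw [hrot, his3]
      _ = is.length • tinv θ + ttr (prodAB A B is) := by
          have : prodAB D B is = fun p q => is.length • tinv θ + prodAB A B is p q := by
            funext p q; exact prodAB_scalar A B (tinv θ) is p q
          rw [this, ttr_scalar]
      _ ≤ (0 : WithBot ℝ) := by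
          have hkey : ttr (prodAB A B is) ≤ k • θ := by
            rcases Nat.eq_zero_or_pos is.sum with hs0 | hspos
            · have hisrep : is = List.replicate k 0 := by
                have : ∀ a ∈ is, a = 0 := List.sum_eq_zero_iff.1 hs0
                rw [← hisl]
                exact List.eq_replicate_of_mem this
              rw [hisrep, prodAB_replicate_zero]
              rw [← trt_le_iff _ _ _ hkpos]
              refine le_trans ?_ hlamθ
              exact Finset.le_sup (f := fun m => trt (ttr (tpow A m)) m)
                (Finset.mem_Icc.2 ⟨hkpos, le_trans hkm hm2⟩)
            · rw [← trt_le_iff _ _ _ hkpos]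
              exact hθ2 k hkpos (by omega) is hisl hspos (by omega)
          calc is.length • tinv θ + ttr (prodAB A B is)
              ≤ is.length • tinv θ + k • θ := add_le_add_right hkey _
            _ = (0 : WithBot ℝ) := by
                rw [hisl, show tinv θ = ((-θr : ℝ) : WithBot ℝ) from rfl, hθdef,
                  nsmul_coe, nsmul_coe, ← WithBot.coe_add]
                norm_num
end MP5

namespace MP6
open MP MP2 MP3 MP4 MP5 MaxPlus

lemma mulVec_scalarM {n : ℕ} (A : Matrix (Fin n) (Fin n) (WithBot ℝ)) (c : WithBot ℝ)
    (x : Fin n → WithBot ℝ) (i : Fin n) :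
    mulVec (fun a b => c + A a b) x i = c + mulVec A x i := by
  show (Finset.univ.sup fun j => c + A i j + x j) = c + Finset.univ.sup fun j => A i j + x j
  simp_rw [add_finsetSup, add_assoc]

end MP6

set_option maxHeartbeats 2000000

/-- minimization of `x⁻ A x` subject to `B x ⊕ g ≤ x`. -/
theorem stmt_13 {n : ℕ} (A B : Matrix (Fin n) (Fin n) (WithBot ℝ))
    (hlam : ⊥ < specRad A) (hB : TrOp B ≤ 0)
    (g : Fin n → WithBot ℝ)
    (θ : WithBot ℝ)
    (hθ : θ = specRad A ⊔ (Finset.Icc 1 (n - 1)).sup fun k =>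
      ((Finset.univ : Finset (Fin k → Fin (n + 1))).filter
          fun i => 1 ≤ (∑ j, (i j : ℕ)) ∧ (∑ j, (i j : ℕ)) ≤ n - k).sup
        fun i => trt (ttr (prodAB A B (List.ofFn fun j : Fin k => (i j : ℕ)))) k) :
    IsLeast {v | ∃ x : Fin n → WithBot ℝ, Reg x ∧ (∀ i, mulVec B x i ⊔ g i ≤ x i) ∧
        cdot x (mulVec A x) = v} θ ∧
      ∀ x : Fin n → WithBot ℝ, Reg x → (∀ i, mulVec B x i ⊔ g i ≤ x i) →
        (cdot x (mulVec A x) = θ ↔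
          ∃ u : Fin n → WithBot ℝ,
            x = mulVec (kstar fun a b => (tinv θ + A a b) ⊔ B a b) u ∧
            ∀ j, g j ≤ u j) := by
  open MP MP2 MP3 MP4 MP5 MP6 in
  -- θ is real
  have hlamθ : specRad A ≤ θ := by rw [hθ]; exact le_sup_left
  have hθbot : θ ≠ ⊥ := fun h => absurd (lt_of_lt_of_le hlam hlamθ) (by rw [h]; exact lt_irrefl _)
  obtain ⟨θr, hθr⟩ := WithBot.ne_bot_iff_exists.1 hθbot
  set C : Matrix (Fin n) (Fin n) (WithBot ℝ) := fun a b => (tinv θ + A a b) ⊔ B a b with hCdef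
  -- the second part of hθ bounds mixed traces
  have hsupθ : ((Finset.Icc 1 (n - 1)).sup fun k =>
      ((Finset.univ : Finset (Fin k → Fin (n + 1))).filter
          fun i => 1 ≤ (∑ j, (i j : ℕ)) ∧ (∑ j, (i j : ℕ)) ≤ n - k).sup
        fun i => trt (ttr (prodAB A B (List.ofFn fun j : Fin k => (i j : ℕ)))) k) ≤ θ := by
    rw [hθ]; exact le_sup_right
  have hsupθ' := Finset.sup_le_iff.1 hsupθ
  have hθ2 : ∀ (k : ℕ), 1 ≤ k → k ≤ n - 1 → ∀ is : List ℕ, is.length = k →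
      1 ≤ is.sum → is.sum ≤ n - k → trt (ttr (prodAB A B is)) k ≤ θ := by
    intro k hk1 hkn1 is hlen hs1 hs2
    have hsn : is.sum ≤ n := le_trans hs2 (Nat.sub_le n k)
    set ifun : Fin k → Fin (n + 1) := fun j =>
      ⟨is[(j : ℕ)]'(by omega), by
        have hmem : is[(j : ℕ)]'(by omega) ∈ is := List.getElem_mem _
        have := List.single_le_sum (l := is) (by simp) _ hmem
        omega⟩ with hifun
    have hofn : (List.ofFn fun j : Fin k => (ifun j : ℕ)) = is := by
      apply List.ext_getElem
      · simp [hlen]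
      · intro t h1 h2
        simp [hifun]
    have hsum : (∑ j, (ifun j : ℕ)) = is.sum := by
      rw [← List.sum_ofFn, hofn]
    have hk := Finset.sup_le_iff.1 (hsupθ' k (Finset.mem_Icc.2 ⟨hk1, hkn1⟩))
    have := hk ifun (Finset.mem_filter.2 ⟨Finset.mem_univ _, by rw [hsum]; exact ⟨hs1, hs2⟩⟩)
    rwa [hofn] at this
  -- Tr C ≤ 0
  have hTrC : TrOp C ≤ 0 := by
    have := TrC_le A B hB θr (by rw [hθr]; exact hlamθ)
      (fun k h1 h2 is h3 h4 h5 => by rw [hθr]; exact hθ2 k h1 h2 is h3 h4 h5)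
    rw [hCdef, ← hθr]
    exact this
  -- basic facts about x = (kstar C) u
  have hCx : ∀ u : Fin n → WithBot ℝ, ∀ i,
      mulVec C (mulVec (kstar C) u) i ≤ mulVec (kstar C) u i := by
    intro u i
    rw [← mulVec_tmul]
    exact mulVec_mono (tmul_kstar_le C hTrC) (fun _ => le_rfl) i
  have hBxS : ∀ u : Fin n → WithBot ℝ, ∀ i,
      mulVec B (mulVec (kstar C) u) i ≤ mulVec (kstar C) u i := by
    intro u i
    exact le_trans (mulVec_mono (fun a b => le_sup_right) (fun _ => le_rfl) i) (hCx u i)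
  have huxS : ∀ u : Fin n → WithBot ℝ, ∀ j, u j ≤ mulVec (kstar C) u j := fun u j =>
    le_mulVec_kstar C u j
  -- the value of any regular x = (kstar C) u is at most θ
  have hub : ∀ u : Fin n → WithBot ℝ, Reg (mulVec (kstar C) u) →
      cdot (mulVec (kstar C) u) (mulVec A (mulVec (kstar C) u)) ≤ θ := by
    intro u hreg
    set x := mulVec (kstar C) u with hx
    apply Finset.sup_le
    intro i _
    obtain ⟨r, hr⟩ := WithBot.ne_bot_iff_exists.1 (hreg i)
    have hDle : tinv θ + mulVec A x i ≤ x i := by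
      rw [← mulVec_scalarM A (tinv θ) x i]
      exact le_trans (mulVec_mono (fun a b => le_sup_left) (fun _ => le_rfl) i) (hCx u i)
    rw [← hr] at hDle ⊢
    rw [show tinv ((r : ℝ) : WithBot ℝ) = ((-r : ℝ) : WithBot ℝ) from rfl]
    rw [show tinv θ = ((-θr : ℝ) : WithBot ℝ) by rw [← hθr]; rfl] at hDle
    rw [real_add_le_iff] at hDle ⊢
    calc mulVec A x i ≤ ((- -θr : ℝ) : WithBot ℝ) + ((r : ℝ) : WithBot ℝ) := hDle
      _ = ((- -r : ℝ) : WithBot ℝ) + θ := by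
          rw [← hθr, ← WithBot.coe_add, ← WithBot.coe_add]
          congr 1
          ring
  -- lower bound for every feasible regular x
  have hlb : ∀ x : Fin n → WithBot ℝ, Reg x → (∀ i, mulVec B x i ⊔ g i ≤ x i) →
      θ ≤ cdot x (mulVec A x) := by
    intro x hreg hfeas
    exact lower_bound A B x hreg (fun i => le_trans le_sup_left (hfeas i)) θ hθ
  -- the canonical optimal solution
  set u₀ : Fin n → WithBot ℝ := fun j => g j ⊔ 0 with hu₀
  set x₀ : Fin n → WithBot ℝ := mulVec (kstar C) u₀ with hx₀
  have hreg₀ : Reg x₀ := by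
    intro i
    have h0 : (0 : WithBot ℝ) ≤ x₀ i := le_trans le_sup_right (huxS u₀ i)
    intro hbot
    rw [hbot] at h0
    exact absurd h0 (by simp)
  have hfeas₀ : ∀ i, mulVec B x₀ i ⊔ g i ≤ x₀ i := fun i =>
    sup_le (hBxS u₀ i) (le_trans le_sup_left (huxS u₀ i))
  have hval₀ : cdot x₀ (mulVec A x₀) = θ :=
    le_antisymm (hub u₀ hreg₀) (hlb x₀ hreg₀ hfeas₀)
  constructor
  · constructor
    · exact ⟨x₀, hreg₀, hfeas₀, hval₀⟩
    · rintro v ⟨x, hreg, hfeas, hval⟩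
      rw [← hval]
      exact hlb x hreg hfeas
  · intro x hreg hfeas
    constructor
    · intro hval
      refine ⟨x, ?_, fun j => le_trans le_sup_right (hfeas j)⟩
      have hCxle : ∀ i, mulVec C x i ≤ x i := by
        intro i
        apply Finset.sup_le
        intro j _
        rw [show C i j = (tinv θ + A i j) ⊔ B i j from rfl, wsup_add]
        apply sup_le
        · obtain ⟨r, hr⟩ := WithBot.ne_bot_iff_exists.1 (hreg i)
          have hAij : A i j + x j ≤ mulVec A x i :=
            Finset.le_sup (f := fun j => A i j + x j) (Finset.mem_univ j)
          have hAix : mulVec A x i ≤ θ + x i := by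
            have h1 : tinv (x i) + mulVec A x i ≤ θ := by
              rw [← hval]
              exact cdot_term_le x (mulVec A x) i
            rw [← hr] at h1 ⊢
            rw [show tinv ((r : ℝ) : WithBot ℝ) = ((-r : ℝ) : WithBot ℝ) from rfl] at h1
            exact le_of_tinv_add_le r h1
          calc tinv θ + A i j + x j = tinv θ + (A i j + x j) := by rw [add_assoc]
            _ ≤ tinv θ + (θ + x i) := add_le_add_right (le_trans hAij hAix) _
            _ = x i := by
                rw [show tinv θ = ((-θr : ℝ) : WithBot ℝ) by rw [← hθr]; rfl, ← hθr,
                  ← add_assoc, ← WithBot.coe_add]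
                norm_num
        · exact le_trans (Finset.le_sup (f := fun j => B i j + x j) (Finset.mem_univ j))
            (le_trans le_sup_left (hfeas i))
      funext i
      exact le_antisymm (le_mulVec_kstar C x i) (mulVec_kstar_le C x hCxle i)
    · rintro ⟨u, hxu, hgu⟩
      have hregx : Reg (mulVec (kstar C) u) := by rw [← hxu]; exact hreg
      rw [hxu]
      refine le_antisymm (hub u hregx) ?_
      apply hlb (mulVec (kstar C) u) hregx
      rw [← hxu]
      exact hfeas
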